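/- Let V be a real Hilbert space with inner product a(·,·) and let b(·,·) be another positive definite symmetric bilinear form on V, bounded with respect to a. Let T : V → V be the bounded operator defined by a(Tf, v) = b(f, v) for all v ∈ V. Let V_h ⊆ V be a closed subspace with a-orthogonal projection P_h, and define η = sup over f with ‖f‖_b = 1 of ‖(I − P_h) T f‖_a. Then for every u ∈ V, ‖(I − P_h) u‖_b ≤ η ‖(I − P_h) u‖_a, where ‖·‖_a and ‖·‖_b are the norms induced by a and b. -/

import Mathlib

open RealInnerProductSpace

lemma bnonneg_aux {V : Type*} [NormedAddCommGroup V] [InnerProductSpace ℝ V]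
    (b : LinearMap.BilinForm ℝ V) (hbpos : ∀ x, x ≠ 0 → 0 < b x x) (x : V) :
    0 ≤ b x x := by
  by_cases hx : x = 0
  · simp [hx]
  · exact (hbpos x hx).le

lemma bcs_aux {V : Type*} [NormedAddCommGroup V] [InnerProductSpace ℝ V]
    (b : LinearMap.BilinForm ℝ V)
    (hbsymm : ∀ x y, b x y = b y x) (hbpos : ∀ x, x ≠ 0 → 0 < b x x) (x y : V) :
    (b x y) ^ 2 ≤ b x x * b y y := by
  by_cases hy : y = 0
  · simp [hy]
  · have hyy : 0 < b y y := hbpos y hy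
    have h := bnonneg_aux b hbpos ((b y y) • x - (b x y) • y)
    simp only [map_sub, map_smul, LinearMap.sub_apply, LinearMap.smul_apply,
      smul_eq_mul] at h
    rw [← hbsymm x y] at h
    have h2 : 0 ≤ b y y * (b y y * b x x - (b x y) ^ 2) := by nlinarith
    nlinarith [h2, hyy]

theorem stmt_3 {V : Type*} [NormedAddCommGroup V] [InnerProductSpace ℝ V] [CompleteSpace V]
    (b : LinearMap.BilinForm ℝ V)
    (hbsymm : ∀ x y, b x y = b y x) (hbpos : ∀ x, x ≠ 0 → 0 < b x x)
    (hbdd : ∃ C : ℝ, ∀ x y, b x y ≤ C * ‖x‖ * ‖y‖)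
    (T : V →ₗ[ℝ] V) (hT : ∀ f v, ⟪T f, v⟫ = b f v)
    (Vh : Submodule ℝ V) [CompleteSpace Vh] :
    ∀ u : V,
      Real.sqrt (b (u - (Submodule.orthogonalProjectionOnto Vh u : V)) (u - (Submodule.orthogonalProjectionOnto Vh u : V)))
        ≤ sSup ((fun f => ‖T f - (Submodule.orthogonalProjectionOnto Vh (T f) : V)‖) ''
            {f : V | Real.sqrt (b f f) = 1})
          * ‖u - (Submodule.orthogonalProjectionOnto Vh u : V)‖ := by
  intro u
  obtain ⟨C, hC⟩ := hbdd
  set C' : ℝ := max C 0 with hC'def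
  have hC'nonneg : (0:ℝ) ≤ C' := le_max_right _ _
  have hC' : ∀ x y, b x y ≤ C' * ‖x‖ * ‖y‖ := by
    intro x y
    calc b x y ≤ C * ‖x‖ * ‖y‖ := hC x y
      _ ≤ C' * ‖x‖ * ‖y‖ :=
        mul_le_mul_of_nonneg_right
          (mul_le_mul_of_nonneg_right (le_max_left C 0) (norm_nonneg x)) (norm_nonneg y)
  set S := ((fun f => ‖T f - (Submodule.orthogonalProjectionOnto Vh (T f) : V)‖) ''
      {f : V | Real.sqrt (b f f) = 1}) with hSdef
  -- boundedness of S
  have hbound : ∀ y ∈ S, y ≤ Real.sqrt C' := by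
    rintro _ ⟨f, hf, rfl⟩
    have hf1 : b f f = 1 := by
      have hfne : f ≠ 0 := by
        intro h; rw [h] at hf; simp at hf
      have hpos : 0 < b f f := hbpos f hfne
      simp only [Set.mem_setOf_eq] at hf
      have h := Real.sq_sqrt hpos.le
      rw [hf] at h; linarith
    set w : V := T f - (Submodule.orthogonalProjectionOnto Vh (T f) : V) with hwdef
    have hwperp : w ∈ Vhᗮ := Submodule.sub_starProjection_mem_orthogonal (K := Vh) (T f)
    -- ‖w‖² = b f w
    have hnw : ‖w‖ ^ 2 = b f w := by
      have h1 : ⟪(Submodule.orthogonalProjectionOnto Vh (T f) : V), w⟫ = 0 :=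
        (Submodule.mem_orthogonal Vh w).mp hwperp _ (Submodule.orthogonalProjectionOnto Vh (T f)).2
      have h2 : ⟪T f, w⟫ = b f w := hT f w
      have : ⟪w, w⟫ = b f w := by
        have : ⟪w, w⟫ = ⟪T f, w⟫ - ⟪(Submodule.orthogonalProjectionOnto Vh (T f) : V), w⟫ := by
          rw [hwdef]; rw [inner_sub_left]
        rw [this, h1, h2]; ring
      rw [← real_inner_self_eq_norm_sq, this]
    -- ‖T w‖ ≤ C' ‖w‖
    have hTw : ‖T w‖ ≤ C' * ‖w‖ := by
      have h1 : ‖T w‖ ^ 2 = b w (T w) := by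
        rw [← hT w (T w), real_inner_self_eq_norm_sq]
      have h2 : b w (T w) ≤ C' * ‖w‖ * ‖T w‖ := hC' w (T w)
      by_cases h0 : ‖T w‖ = 0
      · rw [h0]; positivity
      · have hp : 0 < ‖T w‖ := lt_of_le_of_ne (norm_nonneg _) (Ne.symm h0)
        nlinarith
    -- b w w ≤ C' ‖w‖²
    have hbww : b w w ≤ C' * ‖w‖ ^ 2 := by
      have h1 : b w w = ⟪T w, w⟫ := (hT w w).symm
      have h2 : ⟪T w, w⟫ ≤ ‖T w‖ * ‖w‖ := real_inner_le_norm _ _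
      nlinarith [norm_nonneg w]
    -- (b f w)² ≤ b w w
    have hcs : (b f w) ^ 2 ≤ b w w := by
      have := bcs_aux b hbsymm hbpos f w
      rw [hf1] at this; linarith
    -- conclude ‖w‖ ≤ √C'
    have hle : ‖w‖ ^ 2 ≤ C' := by
      have h4 : ‖w‖ ^ 4 ≤ C' * ‖w‖ ^ 2 := by nlinarith [hnw, hcs, hbww]
      by_cases h0 : ‖w‖ = 0
      · rw [h0]; simpa using hC'nonneg
      · have hp : 0 < ‖w‖ := lt_of_le_of_ne (norm_nonneg _) (Ne.symm h0)
        nlinarith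
    nlinarith [Real.sq_sqrt hC'nonneg, Real.sqrt_nonneg C', norm_nonneg w]
  have hbdd : BddAbove S := ⟨Real.sqrt C', hbound⟩
  set e : V := u - (Submodule.orthogonalProjectionOnto Vh u : V) with hedef
  by_cases he0 : e = 0
  · rw [he0]; simp
  · have hβ : 0 < b e e := hbpos e he0
    set s : ℝ := Real.sqrt (b e e) with hsdef
    have hs : 0 < s := Real.sqrt_pos.mpr hβ
    have hs2 : s ^ 2 = b e e := Real.sq_sqrt hβ.le
    set f : V := s⁻¹ • e with hfdef
    have hff : b f f = 1 := by
      simp only [hfdef, map_smul, LinearMap.smul_apply, smul_eq_mul]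
      field_simp
      nlinarith
    have hfmem : f ∈ {f : V | Real.sqrt (b f f) = 1} := by
      simp [Set.mem_setOf_eq, hff]
    have hmem : ‖T f - (Submodule.orthogonalProjectionOnto Vh (T f) : V)‖ ∈ S :=
      ⟨f, hfmem, rfl⟩
    have hη : ‖T f - (Submodule.orthogonalProjectionOnto Vh (T f) : V)‖ ≤ sSup S := le_csSup hbdd hmem
    -- relate T f projections to T e
    have hTf : T f - (Submodule.orthogonalProjectionOnto Vh (T f) : V) =
        s⁻¹ • (T e - (Submodule.orthogonalProjectionOnto Vh (T e) : V)) := by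
      rw [hfdef, map_smul, map_smul]
      push_cast
      rw [smul_sub]
    have hnorm : ‖T f - (Submodule.orthogonalProjectionOnto Vh (T f) : V)‖ =
        s⁻¹ * ‖T e - (Submodule.orthogonalProjectionOnto Vh (T e) : V)‖ := by
      rw [hTf, norm_smul, Real.norm_eq_abs, abs_of_pos (inv_pos.mpr hs)]
    -- key: b e e = ⟪(I-P)Te, e⟫
    have heperp : e ∈ Vhᗮ := Submodule.sub_starProjection_mem_orthogonal (K := Vh) u
    have hkey : b e e = ⟪T e - (Submodule.orthogonalProjectionOnto Vh (T e) : V), e⟫ := by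
      have h1 : ⟪(Submodule.orthogonalProjectionOnto Vh (T e) : V), e⟫ = 0 :=
        (Submodule.mem_orthogonal Vh e).mp heperp _ (Submodule.orthogonalProjectionOnto Vh (T e)).2
      rw [inner_sub_left, h1, hT]; ring
    have hkey2 : b e e ≤ ‖T e - (Submodule.orthogonalProjectionOnto Vh (T e) : V)‖ * ‖e‖ := by
      rw [hkey]; exact real_inner_le_norm _ _
    have hQTe : ‖T e - (Submodule.orthogonalProjectionOnto Vh (T e) : V)‖ ≤ s * sSup S := by
      have := hη
      rw [hnorm] at this
      calc ‖T e - (Submodule.orthogonalProjectionOnto Vh (T e) : V)‖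
          = s * (s⁻¹ * ‖T e - (Submodule.orthogonalProjectionOnto Vh (T e) : V)‖) := by
            field_simp
        _ ≤ s * sSup S := by
            exact mul_le_mul_of_nonneg_left this hs.le
    have hcf : s ^ 2 ≤ s * (sSup S * ‖e‖) := by
      rw [hs2]
      calc b e e ≤ ‖T e - (Submodule.orthogonalProjectionOnto Vh (T e) : V)‖ * ‖e‖ := hkey2
        _ ≤ (s * sSup S) * ‖e‖ := mul_le_mul_of_nonneg_right hQTe (norm_nonneg _)
        _ = s * (sSup S * ‖e‖) := by ring
    have : s ≤ sSup S * ‖e‖ := by nlinarith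
    exact this
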